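/- Limit of rescaled Rényi divergence: if the density ratio dp/dq is essentially bounded, lim_{α→∞} α R_α(p‖q) = log (esssup_q dp/dq), where R_α(p‖q) = (1/(α(α−1))) log E_q[(dp/dq)^α]. -/

import Mathlib

open MeasureTheory Filter Topology

/-- If the density ratio `dp/dq` is essentially bounded, then
`α R_α(p‖q) → log (esssup_q dp/dq)` as `α → ∞`, where
`R_α(p‖q) = (1/(α(α−1))) log E_q[(dp/dq)^α]`. -/
theorem renyi_limit_esssup {Ω : Type*} [MeasurableSpace Ω] (p q : Measure Ω)
    [IsProbabilityMeasure p] [IsProbabilityMeasure q] (hpq : p ≪ q) (hqp : q ≪ p)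
    (C : ℝ) (hbound : ∀ᵐ x ∂q, (p.rnDeriv q x).toReal ≤ C) :
    Tendsto
      (fun α : ℝ =>
        α * ((1 / (α * (α - 1))) * Real.log (∫ x, ((p.rnDeriv q x).toReal) ^ α ∂q)))
      atTop (𝓝 (Real.log (essSup (fun x => (p.rnDeriv q x).toReal) q))) := by
  set f : Ω → ℝ := fun x => (p.rnDeriv q x).toReal with hfdef
  show Tendsto (fun α : ℝ => α * ((1 / (α * (α - 1))) * Real.log (∫ x, f x ^ α ∂q)))
    atTop (𝓝 (Real.log (essSup f q)))
  have hf_meas : Measurable f := (Measure.measurable_rnDeriv p q).ennreal_toReal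
  have hf_nonneg : ∀ x, 0 ≤ f x := fun x => ENNReal.toReal_nonneg
  have hf_int : Integrable f q := Measure.integrable_toReal_rnDeriv
  have hint : ∫ x, f x ∂q = 1 := by
    rw [Measure.integral_toReal_rnDeriv hpq]; simp
  set M : ℝ := essSup f q with hMdef
  have hbdd : IsBoundedUnder (· ≤ ·) (ae q) f := ⟨C, hbound⟩
  have hfM : ∀ᵐ x ∂q, f x ≤ M := ae_le_essSup hbdd
  have hM1 : (1 : ℝ) ≤ M := by
    have h2 : ∫ x, f x ∂q ≤ ∫ _x, M ∂q :=
      integral_mono_ae hf_int (integrable_const M) hfM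
    simpa [hint] using h2
  have hM0 : (0 : ℝ) < M := lt_of_lt_of_le one_pos hM1
  -- positivity of level sets below the essential supremum
  have hpos : ∀ r : ℝ, r < M → q {x | r < f x} ≠ 0 := by
    intro r hr h0
    have hae : ∀ᵐ x ∂q, f x ≤ r := by
      rw [ae_iff]; simpa [not_le] using h0
    have hcb : IsCoboundedUnder (· ≤ ·) (ae q) f :=
      isCoboundedUnder_le_of_le (ae q) (fun x => hf_nonneg x)
    exact absurd (limsup_le_of_le hcb hae) (not_le.2 hr)
  -- integrability of f ^ α
  have hint_pow : ∀ α : ℝ, 1 ≤ α → Integrable (fun x => f x ^ α) q := by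
    intro α hα
    refine Integrable.mono' (integrable_const (M ^ α))
      (hf_meas.pow measurable_const).aestronglyMeasurable ?_
    filter_upwards [hfM] with x hx
    rw [Real.norm_eq_abs, abs_of_nonneg (Real.rpow_nonneg (hf_nonneg x) α)]
    exact Real.rpow_le_rpow (hf_nonneg x) hx (le_trans zero_le_one hα)
  -- lower bound on the integral
  have hlow : ∀ r : ℝ, 0 < r → ∀ α : ℝ, 1 ≤ α →
      r ^ α * (q {x | r < f x}).toReal ≤ ∫ x, f x ^ α ∂q := by
    intro r hr α hα
    have hAm : MeasurableSet {x | r < f x} := measurableSet_lt measurable_const hf_meas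
    have h1 : ∫ x in {x | r < f x}, f x ^ α ∂q ≤ ∫ x, f x ^ α ∂q :=
      setIntegral_le_integral (hint_pow α hα)
        (Filter.Eventually.of_forall fun x => Real.rpow_nonneg (hf_nonneg x) α)
    refine le_trans ?_ h1
    have h2 : r ^ α * (q {x | r < f x}).toReal = ∫ _x in {x | r < f x}, r ^ α ∂q := by
      rw [setIntegral_const, smul_eq_mul, Measure.real]; ring
    rw [h2]
    refine setIntegral_mono_on (integrableOn_const (measure_ne_top _ _))
      ((hint_pow α hα).integrableOn) hAm ?_
    intro x hx
    exact Real.rpow_le_rpow (le_of_lt hr) (le_of_lt hx) (le_trans zero_le_one hα)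
  -- positivity of the integral
  have hk0 : 0 < (q {x | M / 2 < f x}).toReal :=
    ENNReal.toReal_pos (hpos _ (by linarith)) (measure_ne_top q _)
  have hIpos : ∀ α : ℝ, 1 ≤ α → 0 < ∫ x, f x ^ α ∂q := by
    intro α hα
    refine lt_of_lt_of_le ?_ (hlow (M / 2) (by linarith) α hα)
    exact mul_pos (Real.rpow_pos_of_pos (by linarith) α) hk0
  -- upper bound on the integral
  have hup : ∀ α : ℝ, 1 ≤ α → ∫ x, f x ^ α ∂q ≤ M ^ (α - 1) := by
    intro α hα
    have h1 : ∀ᵐ x ∂q, f x ^ α ≤ M ^ (α - 1) * f x := by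
      filter_upwards [hfM] with x hx
      rcases eq_or_lt_of_le (hf_nonneg x) with h | h
      · rw [← h, Real.zero_rpow (by linarith)]
        have : (0:ℝ) ≤ M ^ (α - 1) := Real.rpow_nonneg (le_of_lt hM0) _
        nlinarith [hf_nonneg x]
      · have hfx : f x ^ α = f x ^ (α - 1) * f x := by
          rw [← Real.rpow_add_one (ne_of_gt h) (α - 1)]; ring_nf
        rw [hfx]
        exact mul_le_mul_of_nonneg_right
          (Real.rpow_le_rpow (hf_nonneg x) hx (by linarith)) (hf_nonneg x)
    calc ∫ x, f x ^ α ∂q ≤ ∫ x, M ^ (α - 1) * f x ∂q :=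
          integral_mono_ae (hint_pow α hα) (hf_int.const_mul _) h1
      _ = M ^ (α - 1) := by rw [integral_const_mul, hint, mul_one]
  -- auxiliary limit : (α-1)⁻¹ → 0
  have ht : Tendsto (fun α : ℝ => (α - 1)⁻¹) atTop (𝓝 0) := by
    have h := (tendsto_atTop_add_const_right atTop (-1) (tendsto_id (α := ℝ))).inv_tendsto_atTop
    simpa [sub_eq_add_neg, Pi.inv_def] using h
  -- simplified form of the function
  have heq : ∀ᶠ α : ℝ in atTop,
      (α - 1)⁻¹ * Real.log (∫ x, f x ^ α ∂q)
        = α * ((1 / (α * (α - 1))) * Real.log (∫ x, f x ^ α ∂q)) := by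
    filter_upwards [eventually_gt_atTop 1] with α hα
    have h0 : α ≠ 0 := by linarith
    have h1 : α - 1 ≠ 0 := by intro h; rw [sub_eq_zero] at h; linarith
    field_simp
  refine Tendsto.congr' heq ?_
  refine tendsto_order.2 ⟨?_, ?_⟩
  · -- lower bound part
    intro b hb
    have hexpb : Real.exp b < M := by
      have := Real.exp_lt_exp.2 hb
      rwa [Real.exp_log hM0] at this
    set r : ℝ := (Real.exp b + M) / 2 with hrdef
    have hr0 : 0 < r := by
      have := Real.exp_pos b
      rw [hrdef]; linarith
    have hrM : r < M := by rw [hrdef]; linarith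
    have hbr : b < Real.log r := by
      rw [Real.lt_log_iff_exp_lt hr0]; rw [hrdef]; linarith
    set k : ℝ := (q {x | r < f x}).toReal with hkdef
    have hk : 0 < k := ENNReal.toReal_pos (hpos r hrM) (measure_ne_top q _)
    -- the auxiliary lower bound function tends to log r
    have hlim : Tendsto (fun α : ℝ => Real.log r + (Real.log r + Real.log k) * (α - 1)⁻¹)
        atTop (𝓝 (Real.log r)) := by
      have h1 := ht.const_mul (Real.log r + Real.log k)
      have h2 := (tendsto_const_nhds (x := Real.log r) (f := atTop (α := ℝ))).add h1
      simpa using h2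
    have hev : ∀ᶠ α : ℝ in atTop,
        b < (α - 1)⁻¹ * Real.log (∫ x, f x ^ α ∂q) := by
      filter_upwards [eventually_ge_atTop (1:ℝ), eventually_gt_atTop (1:ℝ),
        hlim.eventually (eventually_gt_nhds hbr)] with α hα hα1 hαb
      have hI := hIpos α hα
      have hloga : Real.log (r ^ α * k) ≤ Real.log (∫ x, f x ^ α ∂q) :=
        Real.log_le_log (mul_pos (Real.rpow_pos_of_pos hr0 α) hk) (hlow r hr0 α hα)
      have hlogeq : Real.log (r ^ α * k) = α * Real.log r + Real.log k := by
        rw [Real.log_mul (ne_of_gt (Real.rpow_pos_of_pos hr0 α)) (ne_of_gt hk),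
          Real.log_rpow hr0]
      have hα1' : (0:ℝ) < α - 1 := by linarith
      have key : Real.log r + (Real.log r + Real.log k) * (α - 1)⁻¹
          ≤ (α - 1)⁻¹ * Real.log (∫ x, f x ^ α ∂q) := by
        have h2 : α * Real.log r + Real.log k ≤ Real.log (∫ x, f x ^ α ∂q) := by
          rw [← hlogeq]; exact hloga
        have h3 : Real.log r + (Real.log r + Real.log k) * (α - 1)⁻¹
            = (α - 1)⁻¹ * (α * Real.log r + Real.log k) := by
          field_simp
          ring
        rw [h3]
        exact mul_le_mul_of_nonneg_left h2 (le_of_lt (inv_pos.2 hα1'))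
      linarith
    exact hev
  · -- upper bound part
    intro b hb
    filter_upwards [eventually_ge_atTop (1:ℝ), eventually_gt_atTop (1:ℝ)] with α hα hα1
    have hα1' : (0:ℝ) < α - 1 := by linarith
    have h1 : Real.log (∫ x, f x ^ α ∂q) ≤ (α - 1) * Real.log M := by
      calc Real.log (∫ x, f x ^ α ∂q) ≤ Real.log (M ^ (α - 1)) :=
            Real.log_le_log (hIpos α hα) (hup α hα)
        _ = (α - 1) * Real.log M := Real.log_rpow hM0 _
    have h2 : (α - 1)⁻¹ * Real.log (∫ x, f x ^ α ∂q) ≤ Real.log M := by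
      rw [inv_mul_le_iff₀ hα1']
      linarith [h1]
    linarith
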